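/- Fix p ∈ [1,2], an integer n ≥ 1, x ∈ ℝⁿ, and α ∈ (0,1). Suppose g₁,…,gₙ are {−1,+1}-valued random variables, each uniform, that are pairwise independent, and χ₁,…,χₙ are {0,1}-valued random variables with P[χᵢ = 1] = α, where the family (gᵢ) is independent of the family (χᵢ). Then E[|Σ_{i=1}^n gᵢχᵢxᵢ|^p] ≤ α·‖x‖_p^p. -/

import Mathlib

open MeasureTheory ProbabilityTheory
open scoped ENNReal NNReal

private lemma real_rpow_add_le {a b q : ℝ} (ha : 0 ≤ a) (hb : 0 ≤ b) (hq : 0 ≤ q)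
    (hq1 : q ≤ 1) : (a + b) ^ q ≤ a ^ q + b ^ q := by
  have h := NNReal.rpow_add_le_add_rpow a.toNNReal b.toNNReal hq hq1
  have h' := NNReal.coe_le_coe.2 h
  push_cast at h'
  rwa [Real.coe_toNNReal a ha, Real.coe_toNNReal b hb] at h'

private lemma sum_rpow_le_rpow_sum {ι : Type*} (s : Finset ι) (f : ι → ℝ) (hf : ∀ i, 0 ≤ f i)
    {q : ℝ} (hq0 : 0 < q) (hq1 : q ≤ 1) :
    (∑ i ∈ s, f i) ^ q ≤ ∑ i ∈ s, f i ^ q := by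
  classical
  induction s using Finset.cons_induction with
  | empty => simp [Real.zero_rpow hq0.ne']
  | cons a s ha ih =>
    rw [Finset.sum_cons, Finset.sum_cons]
    calc (f a + ∑ i ∈ s, f i) ^ q ≤ f a ^ q + (∑ i ∈ s, f i) ^ q :=
          real_rpow_add_le (hf a) (Finset.sum_nonneg fun i _ => hf i) hq0.le hq1
      _ ≤ f a ^ q + ∑ i ∈ s, f i ^ q := add_le_add_right ih _

private lemma integrable_of_bdd {Ω : Type} [MeasurableSpace Ω] {P : Measure Ω}
    [IsProbabilityMeasure P] {f : Ω → ℝ} (hf : Measurable f) {C : ℝ}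
    (h : ∀ ω, |f ω| ≤ C) : Integrable f P :=
  (integrable_const C).mono' hf.aestronglyMeasurable (ae_of_all _ fun ω => by
    simpa [Real.norm_eq_abs] using h ω)

private lemma sign_sq_integral {n : ℕ} {Ω : Type} [MeasurableSpace Ω] (P : Measure Ω)
    [IsProbabilityMeasure P] (g : Fin n → Ω → ℝ) (hgm : ∀ i, Measurable (g i))
    (hgval : ∀ i ω, g i ω = 1 ∨ g i ω = -1)
    (hgunif : ∀ i, P {ω | g i ω = 1} = 1 / 2)
    (hgpair : Pairwise fun i j => IndepFun (g i) (g j) P)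
    (c : Fin n → ℝ) :
    ∫ ω, (∑ i, g i ω * c i) ^ 2 ∂P = ∑ i, c i ^ 2 := by
  have habs : ∀ i ω, |g i ω| ≤ 1 := fun i ω => by rcases hgval i ω with h | h <;> simp [h]
  have hint : ∀ i, Integrable (g i) P := fun i => integrable_of_bdd (hgm i) (habs i)
  have hEg : ∀ i, ∫ ω, g i ω ∂P = 0 := by
    intro i
    have hs : MeasurableSet {ω | g i ω = 1} := (hgm i) (measurableSet_singleton 1)
    have hrepr : (fun ω => g i ω) =
        fun ω => ({ω | g i ω = 1}.indicator (fun _ => (2 : ℝ)) ω) - 1 := by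
      funext ω
      rcases hgval i ω with h | h
      · simp [Set.indicator_apply, h]; norm_num
      · have hne : g i ω ≠ 1 := by rw [h]; norm_num
        simp only [Set.indicator_apply, Set.mem_setOf_eq, hne, if_false, h]; norm_num
    rw [hrepr, integral_sub ((integrable_const (2:ℝ)).indicator hs) (integrable_const 1)]
    rw [integral_indicator_const (2:ℝ) hs, integral_const, measureReal_def, hgunif i]
    norm_num [ENNReal.toReal_div, measure_univ]
  have hEgg : ∀ i j, i ≠ j → ∫ ω, g i ω * g j ω ∂P = 0 := by
    intro i j hij
    have := (hgpair hij).integral_mul_eq_mul_integral (hint i).aestronglyMeasurable (hint j).aestronglyMeasurable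
    simp only [Pi.mul_apply] at this
    rw [show (fun ω => g i ω * g j ω) = g i * g j from rfl]
    rw [show integral P (g i * g j) = ∫ x, g i x * g j x ∂P from rfl, this, hEg i, zero_mul]
  have hsq : ∀ ω, (∑ i, g i ω * c i) ^ 2 =
      ∑ i : Fin n, ∑ j : Fin n, c i * c j * (g i ω * g j ω) := by
    intro ω
    rw [sq, Finset.sum_mul_sum]
    exact Finset.sum_congr rfl fun i _ => Finset.sum_congr rfl fun j _ => by ring
  have hterm_int : ∀ (i j : Fin n), Integrable (fun ω => c i * c j * (g i ω * g j ω)) P := by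
    intro i j
    refine integrable_of_bdd (by exact (measurable_const.mul ((hgm i).mul (hgm j)))) (C := |c i * c j|) ?_
    intro ω
    rw [abs_mul, abs_mul (g i ω)]
    calc |c i * c j| * (|g i ω| * |g j ω|) ≤ |c i * c j| * (1 * 1) := by
          apply mul_le_mul_of_nonneg_left _ (abs_nonneg _)
          exact mul_le_mul (habs i ω) (habs j ω) (abs_nonneg _) zero_le_one
      _ = |c i * c j| := by ring
  calc ∫ ω, (∑ i, g i ω * c i) ^ 2 ∂P
      = ∫ ω, ∑ i : Fin n, ∑ j : Fin n, c i * c j * (g i ω * g j ω) ∂P := by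
        simp_rw [hsq]
    _ = ∑ i : Fin n, ∑ j : Fin n, ∫ ω, c i * c j * (g i ω * g j ω) ∂P := by
        rw [integral_finset_sum _ fun i _ => integrable_finset_sum _ fun j _ => hterm_int i j]
        exact Finset.sum_congr rfl fun i _ => integral_finset_sum _ fun j _ => hterm_int i j
    _ = ∑ i : Fin n, c i ^ 2 := by
        refine Finset.sum_congr rfl fun i _ => ?_
        rw [Finset.sum_eq_single i]
        · have hone : ∀ ω, g i ω * g i ω = 1 := fun ω => by
            rcases hgval i ω with h | h <;> simp [h]
          simp_rw [hone]
          simp [sq]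
        · intro j _ hji
          rw [integral_const_mul, hEgg i j (Ne.symm hji), mul_zero]
        · intro h; exact absurd (Finset.mem_univ i) h

private lemma sign_moment_le {n : ℕ} {Ω : Type} [MeasurableSpace Ω] (P : Measure Ω)
    [IsProbabilityMeasure P] (g : Fin n → Ω → ℝ) (hgm : ∀ i, Measurable (g i))
    (hgval : ∀ i ω, g i ω = 1 ∨ g i ω = -1)
    (hgunif : ∀ i, P {ω | g i ω = 1} = 1 / 2)
    (hgpair : Pairwise fun i j => IndepFun (g i) (g j) P)
    {p : ℝ} (hp1 : 1 ≤ p) (hp2 : p ≤ 2) (c : Fin n → ℝ) :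
    ∫⁻ ω, ENNReal.ofReal (|∑ i, g i ω * c i| ^ p) ∂P ≤
      ENNReal.ofReal ((∑ i, c i ^ 2) ^ (p / 2)) := by
  have hp0 : 0 < p := lt_of_lt_of_le zero_lt_one hp1
  set T : Ω → ℝ := fun ω => ∑ i, g i ω * c i with hT
  have hTm : Measurable T := Finset.measurable_sum _ fun i _ => (hgm i).mul_const _
  have habs : ∀ i ω, |g i ω| ≤ 1 := fun i ω => by rcases hgval i ω with h | h <;> simp [h]
  have hTbd : ∀ ω, |T ω| ≤ ∑ i, |c i| := by
    intro ω
    calc |T ω| ≤ ∑ i, |g i ω * c i| := Finset.abs_sum_le_sum_abs _ _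
      _ ≤ ∑ i, |c i| := Finset.sum_le_sum fun i _ => by
          rw [abs_mul]
          calc |g i ω| * |c i| ≤ 1 * |c i| :=
                mul_le_mul_of_nonneg_right (habs i ω) (abs_nonneg _)
            _ = |c i| := one_mul _
  -- Lyapunov via eLpNorm'
  have key : eLpNorm' T p P ≤ eLpNorm' T 2 P :=
    eLpNorm'_le_eLpNorm'_of_exponent_le hp0 hp2 P hTm.aestronglyMeasurable
  set A : ℝ≥0∞ := ∫⁻ ω, (‖T ω‖₊ : ℝ≥0∞) ^ p ∂P with hA
  set B : ℝ≥0∞ := ∫⁻ ω, (‖T ω‖₊ : ℝ≥0∞) ^ (2 : ℝ) ∂P with hB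
  have key' : A ^ (1 / p) ≤ B ^ (1 / (2:ℝ)) := key
  have hAB : A ≤ B ^ (p / 2) := by
    have h1 : A = (A ^ (1 / p)) ^ p := by
      rw [← ENNReal.rpow_mul, one_div, inv_mul_cancel₀ hp0.ne', ENNReal.rpow_one]
    rw [h1]
    calc (A ^ (1 / p)) ^ p ≤ (B ^ (1 / (2:ℝ))) ^ p := ENNReal.rpow_le_rpow key' hp0.le
      _ = B ^ (p / 2) := by rw [← ENNReal.rpow_mul]; congr 1; ring
  -- identify A
  have hAeq : A = ∫⁻ ω, ENNReal.ofReal (|T ω| ^ p) ∂P := by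
    refine lintegral_congr fun ω => ?_
    rw [← enorm_eq_nnnorm, Real.enorm_eq_ofReal_abs, ENNReal.ofReal_rpow_of_nonneg (abs_nonneg _) hp0.le]
  -- identify B
  have hBeq : B = ENNReal.ofReal (∑ i, c i ^ 2) := by
    have h2 : B = ∫⁻ ω, ENNReal.ofReal (T ω ^ 2) ∂P := by
      refine lintegral_congr fun ω => ?_
      rw [← enorm_eq_nnnorm, Real.enorm_eq_ofReal_abs, ENNReal.ofReal_rpow_of_nonneg (abs_nonneg _) (by norm_num)]
      congr 1
      rw [show ((2:ℝ)) = ((2:ℕ):ℝ) by norm_num, Real.rpow_natCast, sq_abs]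
    have hTsq_int : Integrable (fun ω => T ω ^ 2) P := by
      refine integrable_of_bdd (hTm.pow_const 2) (C := (∑ i, |c i|) ^ 2) fun ω => ?_
      rw [abs_pow]
      exact pow_le_pow_left₀ (abs_nonneg _) (hTbd ω) 2
    rw [h2, ← ofReal_integral_eq_lintegral_ofReal hTsq_int (ae_of_all _ fun ω => sq_nonneg _),
      sign_sq_integral P g hgm hgval hgunif hgpair c]
  rw [← hAeq]
  calc A ≤ B ^ (p / 2) := hAB
    _ = ENNReal.ofReal ((∑ i, c i ^ 2) ^ (p / 2)) := by
      rw [hBeq, ENNReal.ofReal_rpow_of_nonneg (Finset.sum_nonneg fun i _ => sq_nonneg _)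
        (by positivity)]

/-- For `p ∈ [1,2]`, pairwise independent uniform signs `gᵢ`, and `{0,1}`-valued `χᵢ`
with `P[χᵢ = 1] = α`, where the family `(gᵢ)` is independent of the family `(χᵢ)`,
we have `E[|Σᵢ gᵢ χᵢ xᵢ|^p] ≤ α ‖x‖_p^p`. -/
theorem expected_rpow_randomized_sum_le (p : ℝ) (hp : p ∈ Set.Icc (1 : ℝ) 2)
    (n : ℕ) (hn : 1 ≤ n) (x : Fin n → ℝ) (α : ℝ) (hα : α ∈ Set.Ioo (0 : ℝ) 1)
    {Ω : Type} [MeasurableSpace Ω] (P : Measure Ω) [IsProbabilityMeasure P]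
    (g χ : Fin n → Ω → ℝ)
    (hgm : ∀ i, Measurable (g i)) (hχm : ∀ i, Measurable (χ i))
    (hgval : ∀ i ω, g i ω = 1 ∨ g i ω = -1)
    (hχval : ∀ i ω, χ i ω = 0 ∨ χ i ω = 1)
    (hgunif : ∀ i, P {ω | g i ω = 1} = 1 / 2)
    (hχprob : ∀ i, P {ω | χ i ω = 1} = ENNReal.ofReal α)
    (hgpair : Pairwise fun i j => IndepFun (g i) (g j) P)
    (hfam : IndepFun (fun ω i => g i ω) (fun ω i => χ i ω) P) :
    ∫ ω, |∑ i, g i ω * χ i ω * x i| ^ p ∂P ≤ α * ∑ i, |x i| ^ p := by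
  obtain ⟨hp1, hp2⟩ := hp
  have hp0 : 0 < p := lt_of_lt_of_le zero_lt_one hp1
  set G : Ω → (Fin n → ℝ) := fun ω i => g i ω with hGdef
  set X : Ω → (Fin n → ℝ) := fun ω i => χ i ω with hXdef
  have hG : Measurable G := measurable_pi_lambda _ fun i => hgm i
  have hX : Measurable X := measurable_pi_lambda _ fun i => hχm i
  have hmap : P.map (fun ω => (G ω, X ω)) = (P.map G).prod (P.map X) :=
    (indepFun_iff_map_prod_eq_prod_map_map hG.aemeasurable hX.aemeasurable).mp hfam
  haveI : IsProbabilityMeasure (P.map G) := Measure.isProbabilityMeasure_map hG.aemeasurable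
  haveI : IsProbabilityMeasure (P.map X) := Measure.isProbabilityMeasure_map hX.aemeasurable
  set F : (Fin n → ℝ) × (Fin n → ℝ) → ℝ≥0∞ :=
    fun z => ENNReal.ofReal (|∑ i, z.1 i * z.2 i * x i| ^ p) with hFdef
  have hinner : Measurable fun z : (Fin n → ℝ) × (Fin n → ℝ) => ∑ i, z.1 i * z.2 i * x i :=
    Finset.measurable_sum _ fun i _ =>
      (((measurable_pi_apply i).comp measurable_fst).mul
        ((measurable_pi_apply i).comp measurable_snd)).mul_const _
  have hF : Measurable F :=
    ENNReal.measurable_ofReal.comp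
      ((Real.continuous_rpow_const hp0.le).measurable.comp hinner.abs)
  -- the key lintegral bound
  have hSm : Measurable fun ω => ∑ i, g i ω * χ i ω * x i :=
    Finset.measurable_sum _ fun i _ => ((hgm i).mul (hχm i)).mul_const _
  have key : ∫⁻ ω, ENNReal.ofReal (|∑ i, g i ω * χ i ω * x i| ^ p) ∂P ≤
      ENNReal.ofReal (α * ∑ i, |x i| ^ p) := by
    have hb_set : MeasurableSet {b : Fin n → ℝ | ∀ i, b i = 0 ∨ b i = 1} := by
      have : {b : Fin n → ℝ | ∀ i, b i = 0 ∨ b i = 1} =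
          ⋂ i, (fun b : Fin n → ℝ => b i) ⁻¹' {0, 1} := by
        ext b; simp [Set.mem_iInter]
      rw [this]
      exact MeasurableSet.iInter fun i =>
        (measurable_pi_apply i) ((measurableSet_singleton (1:ℝ)).insert 0)
    have hb_ae : ∀ᵐ b ∂(P.map X), ∀ i, b i = 0 ∨ b i = 1 :=
      (ae_map_iff hX.aemeasurable hb_set).2 (ae_of_all _ fun ω i => hχval i ω)
    have houter_m : Measurable fun b : Fin n → ℝ => ENNReal.ofReal (∑ i, b i * |x i| ^ p) :=
      ENNReal.measurable_ofReal.comp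
        (Finset.measurable_sum _ fun i _ => (measurable_pi_apply i).mul_const _)
    calc ∫⁻ ω, ENNReal.ofReal (|∑ i, g i ω * χ i ω * x i| ^ p) ∂P
        = ∫⁻ z, F z ∂(P.map (fun ω => (G ω, X ω))) := by
          rw [lintegral_map hF (hG.prodMk hX)]
      _ = ∫⁻ b, ∫⁻ a, F (a, b) ∂(P.map G) ∂(P.map X) := by
          rw [hmap]; exact lintegral_prod_symm F hF.aemeasurable
      _ ≤ ∫⁻ b, ENNReal.ofReal (∑ i, b i * |x i| ^ p) ∂(P.map X) := by
          refine lintegral_mono_ae (hb_ae.mono fun b hb => ?_)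
          have hmb : Measurable fun a : Fin n → ℝ => F (a, b) :=
            hF.comp (measurable_id.prodMk measurable_const)
          have h1 : ∫⁻ a, F (a, b) ∂(P.map G) = ∫⁻ ω, F (G ω, b) ∂P :=
            lintegral_map hmb hG
          have h2 : ∫⁻ ω, F (G ω, b) ∂P =
              ∫⁻ ω, ENNReal.ofReal (|∑ i, g i ω * (b i * x i)| ^ p) ∂P := by
            refine lintegral_congr fun ω => ?_
            have hsum : ∑ i, g i ω * b i * x i = ∑ i, g i ω * (b i * x i) :=
              Finset.sum_congr rfl fun i _ => mul_assoc _ _ _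
            show ENNReal.ofReal (|∑ i, g i ω * b i * x i| ^ p) =
              ENNReal.ofReal (|∑ i, g i ω * (b i * x i)| ^ p)
            rw [hsum]
          rw [h1, h2]
          refine (sign_moment_le P g hgm hgval hgunif hgpair hp1 hp2
            (fun i => b i * x i)).trans ?_
          apply ENNReal.ofReal_le_ofReal
          have hbnn : ∀ i, 0 ≤ b i := fun i => by rcases hb i with h | h <;> simp [h]
          have hq0 : 0 < p / 2 := by linarith
          have hq1 : p / 2 ≤ 1 := by linarith
          have hsq : ∀ i, (b i * x i) ^ 2 = b i * x i ^ 2 := by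
            intro i; rcases hb i with h | h <;> simp [h] <;> ring
          have hterm : ∀ i, (b i * x i ^ 2) ^ (p / 2) = b i * |x i| ^ p := by
            intro i
            have hx2 : (x i ^ 2) ^ (p / 2) = |x i| ^ p := by
              rw [← sq_abs, ← Real.rpow_natCast |x i| 2, ← Real.rpow_mul (abs_nonneg _)]
              congr 1
              push_cast
              ring
            rcases hb i with h | h
            · simp [h, Real.zero_rpow hq0.ne']
            · simp [h, hx2]
          calc (∑ i, (b i * x i) ^ 2) ^ (p / 2)
              = (∑ i, b i * x i ^ 2) ^ (p / 2) := by rw [Finset.sum_congr rfl fun i _ => hsq i]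
            _ ≤ ∑ i, (b i * x i ^ 2) ^ (p / 2) :=
                sum_rpow_le_rpow_sum _ _ (fun i => mul_nonneg (hbnn i) (sq_nonneg _)) hq0 hq1
            _ = ∑ i, b i * |x i| ^ p := Finset.sum_congr rfl fun i _ => hterm i
      _ = ∫⁻ ω, ENNReal.ofReal (∑ i, χ i ω * |x i| ^ p) ∂P := lintegral_map houter_m hX
      _ = ENNReal.ofReal (α * ∑ i, |x i| ^ p) := by
          have hrw : ∀ ω, ENNReal.ofReal (∑ i, χ i ω * |x i| ^ p) =
              ∑ i, ENNReal.ofReal (χ i ω) * ENNReal.ofReal (|x i| ^ p) := by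
            intro ω
            rw [ENNReal.ofReal_sum_of_nonneg fun i _ =>
              mul_nonneg (by rcases hχval i ω with h | h <;> simp [h])
                (Real.rpow_nonneg (abs_nonneg _) p)]
            exact Finset.sum_congr rfl fun i _ =>
              ENNReal.ofReal_mul (by rcases hχval i ω with h | h <;> simp [h])
          simp_rw [hrw]
          have hmeas_i : ∀ i : Fin n,
              Measurable fun ω => ENNReal.ofReal (χ i ω) * ENNReal.ofReal (|x i| ^ p) :=
            fun i => (ENNReal.measurable_ofReal.comp (hχm i)).mul_const _
          rw [lintegral_finset_sum _ fun i _ => hmeas_i i]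
          have hχint : ∀ i, ∫⁻ ω, ENNReal.ofReal (χ i ω) ∂P = ENNReal.ofReal α := by
            intro i
            have hs : MeasurableSet {ω | χ i ω = 1} := (hχm i) (measurableSet_singleton 1)
            have hind : (fun ω => ENNReal.ofReal (χ i ω)) =
                fun ω => ({ω | χ i ω = 1}.indicator (fun _ => (1:ℝ≥0∞)) ω) := by
              funext ω
              rcases hχval i ω with h | h
              · have hne : χ i ω ≠ 1 := by rw [h]; norm_num
                simp [Set.indicator_apply, hne, h]
              · simp [Set.indicator_apply, h]
            rw [hind]
            rw [lintegral_indicator hs]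
            simp [hχprob i]
          have hterm2 : ∀ i, ∫⁻ ω, ENNReal.ofReal (χ i ω) * ENNReal.ofReal (|x i| ^ p) ∂P =
              ENNReal.ofReal α * ENNReal.ofReal (|x i| ^ p) := by
            intro i
            have hm : Measurable fun ω => ENNReal.ofReal (χ i ω) :=
              ENNReal.measurable_ofReal.comp (hχm i)
            rw [lintegral_mul_const _ hm, hχint i]
          rw [Finset.sum_congr rfl fun i _ => hterm2 i, ← Finset.mul_sum,
            ← ENNReal.ofReal_sum_of_nonneg fun i _ => Real.rpow_nonneg (abs_nonneg _) p,
            ← ENNReal.ofReal_mul hα.1.le]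
  -- convert to Bochner integral
  have hnn : 0 ≤ᵐ[P] fun ω => |∑ i, g i ω * χ i ω * x i| ^ p :=
    ae_of_all _ fun ω => Real.rpow_nonneg (abs_nonneg _) p
  rw [integral_eq_lintegral_of_nonneg_ae hnn ((Real.continuous_rpow_const hp0.le).measurable.comp hSm.abs).aestronglyMeasurable]
  refine ENNReal.toReal_le_of_le_ofReal ?_ ?_
  · exact mul_nonneg hα.1.le (Finset.sum_nonneg fun i _ =>
      Real.rpow_nonneg (abs_nonneg _) p)
  · exact key
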